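/- Proposition 1 (extraneous edges only, no missing edges): Let G be a DAG over V ∪ R where every node in R is a leaf with no children. Suppose X, Y ∈ V, Z ⊆ V \ {X, Y}, and let R_K ⊆ R. If X and Y are d-separated by Z ∪ R_K in G, then X and Y are d-separated by Z in G. -/

import Mathlib

/-- A directed graph (edge relation) is acyclic. -/
def IsAcyclic {α : Type*} (G : α → α → Prop) : Prop :=
  ∀ v, ¬ Relation.TransGen G v v

/-- A leaf node: no outgoing edges. -/
def IsLeaf {α : Type*} (G : α → α → Prop) (v : α) : Prop :=
  ∀ w, ¬ G v w

/-- An undirected path from `x` to `y`: a list of at least two distinct vertices,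
starting at `x`, ending at `y`, consecutive vertices adjacent (in either direction). -/
def IsUPath {α : Type*} (G : α → α → Prop) (x y : α) (p : List α) : Prop :=
  2 ≤ p.length ∧ p.head? = some x ∧ p.getLast? = some y ∧ p.Nodup ∧
    p.Chain' (fun a b => G a b ∨ G b a)

/-- The vertex at (interior) position `i` of `p` is a collider:
both adjacent path edges point into it. -/
def ColliderAt {α : Type*} (G : α → α → Prop) (p : List α) (i : ℕ) : Prop :=
  ∃ a b c, p[i-1]? = some a ∧ p[i]? = some b ∧ p[i+1]? = some c ∧ G a b ∧ G c b

/-- A path is active given conditioning set `S`: every interior collider is in `S`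
or has a descendant in `S`, and every interior non-collider is not in `S`. -/
def ActivePath {α : Type*} (G : α → α → Prop) (S : Set α) (x y : α) (p : List α) : Prop :=
  IsUPath G x y p ∧
    ∀ i, 0 < i → i + 1 < p.length →
      ∀ b, p[i]? = some b →
        (ColliderAt G p i → b ∈ S ∨ ∃ d ∈ S, Relation.ReflTransGen G b d) ∧
        (¬ ColliderAt G p i → b ∉ S)

/-- d-separation: no active undirected path between `x` and `y` given `S`. -/
def DSep {α : Type*} (G : α → α → Prop) (x y : α) (S : Set α) : Prop :=
  ∀ p : List α, ¬ ActivePath G S x y p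


/-- Proposition 1: in a DAG over `V ∪ R` where every node of `R` is a
leaf, for `X, Y ∈ V`, `Z ⊆ V \ {X, Y}` and `R_K ⊆ R`, d-separation of `X` and `Y`
by `Z ∪ R_K` implies d-separation by `Z`. -/
theorem dsep_of_dsep_union_indicators {α : Type*} (G : α → α → Prop)
    (hG : IsAcyclic G) (V R : Set α) (hVR : Disjoint V R)
    (hleaf : ∀ r ∈ R, IsLeaf G r)
    (X Y : α) (hX : X ∈ V) (hY : Y ∈ V) (hXY : X ≠ Y)
    (Z : Set α) (hZ : Z ⊆ V \ {X, Y})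
    (RK : Set α) (hRK : RK ⊆ R)
    (h : DSep G X Y (Z ∪ RK)) : DSep G X Y Z := by
  intro p hp
  apply h p
  obtain ⟨hup, hact⟩ := hp
  have hlen := hup.1
  have hchain := hup.2.2.2.2
  have hget : ∀ i (h : i < p.length - 1), (fun a b => G a b ∨ G b a) (p.get ⟨i, by omega⟩) (p.get ⟨i+1, by omega⟩) :=
    fun i h => List.isChain_iff_getElem.mp hchain i (by omega)
  have hnotR : ∀ i b, 0 < i → i + 1 < p.length → p[i]? = some b → b ∉ R := by
    intro i b hi hi1 hb hbR
    have hleafb := hleaf b hbR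
    have hib : p.get ⟨i, by omega⟩ = b := by
      have := List.getElem?_eq_some_iff.mp hb
      obtain ⟨h1, h2⟩ := this
      simpa using h2
    have e1 := hget (i-1) (by omega)
    have e2 := hget i (by omega)
    have hi' : i - 1 + 1 = i := by omega
    rw [show (⟨i-1+1, by omega⟩ : Fin p.length) = ⟨i, by omega⟩ from by simp [hi']] at e1
    rw [hib] at e1 e2
    have ha : G (p.get ⟨i-1, by omega⟩) b := by
      rcases e1 with h1 | h1
      · exact h1
      · exact absurd h1 (hleafb _)
    have hc : G (p.get ⟨i+1, by omega⟩) b := by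
      rcases e2 with h2 | h2
      · exact absurd h2 (hleafb _)
      · exact h2
    have hcol : ColliderAt G p i := by
      refine ⟨p.get ⟨i-1, by omega⟩, b, p.get ⟨i+1, by omega⟩, ?_, hb, ?_, ha, hc⟩
      · rw [List.getElem?_eq_getElem (by omega)]; simp [List.get_eq_getElem]
      · rw [List.getElem?_eq_getElem (by omega)]; simp [List.get_eq_getElem]
    have := (hact i hi hi1 b hb).1 hcol
    have hbnV : b ∉ V := fun hbV => Set.disjoint_left.mp hVR hbV hbR
    rcases this with hbZ | ⟨d, hdZ, hrt⟩
    · exact hbnV (hZ hbZ).1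
    · rcases hrt.cases_head with rfl | ⟨c, hbc, _⟩
      · exact hbnV (hZ hdZ).1
      · exact hleafb _ hbc
  refine ⟨hup, ?_⟩
  intro i hi hi1 b hb
  have hbR' := hnotR i b hi hi1 hb
  obtain ⟨hcol, hncol⟩ := hact i hi hi1 b hb
  constructor
  · intro hc
    rcases hcol hc with hbZ | ⟨d, hd, hrt⟩
    · exact Or.inl (Or.inl hbZ)
    · exact Or.inr ⟨d, Or.inl hd, hrt⟩
  · intro hnc hbS
    rcases hbS with hbZ | hbRK
    · exact hncol hnc hbZ
    · exact hbR' (hRK hbRK)
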